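/- The image X of the map f : ℂ² → ℂ⁴, (s,t) ↦ (s, st, t², t³), satisfies: a point (u,v,w,x) ∈ ℂ⁴ lies in X if and only if u²w = v², vw = ux, uw² = vx, and w³ = x². -/

import Mathlib

/-- The image of `f : ℂ² → ℂ⁴, (s,t) ↦ (s, st, t², t³)` is exactly the common
zero locus of `u²w - v²`, `vw - ux`, `uw² - vx`, `w³ - x²`. -/
theorem stmt16 (q : ℂ × ℂ × ℂ × ℂ) :
    q ∈ Set.range (fun p : ℂ × ℂ => (p.1, p.1 * p.2, p.2 ^ 2, p.2 ^ 3)) ↔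
      q.1 ^ 2 * q.2.2.1 = q.2.1 ^ 2 ∧
      q.2.1 * q.2.2.1 = q.1 * q.2.2.2 ∧
      q.1 * q.2.2.1 ^ 2 = q.2.1 * q.2.2.2 ∧
      q.2.2.1 ^ 3 = q.2.2.2 ^ 2 := by
  obtain ⟨u, v, w, x⟩ := q
  constructor
  · rintro ⟨⟨s, t⟩, h⟩
    simp only [Prod.mk.injEq] at h
    obtain ⟨h1, h2, h3, h4⟩ := h
    subst h1 h2 h3 h4
    refine ⟨by ring, by ring, by ring, by ring⟩
  · rintro ⟨h1, h2, h3, h4⟩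
    simp only at h1 h2 h3 h4 ⊢
    by_cases hu : u = 0
    · subst hu
      have hv : v = 0 := by
        have : v ^ 2 = 0 := by rw [← h1]; ring
        exact pow_eq_zero_iff (n := 2) (by norm_num) |>.mp this
      subst hv
      by_cases hw : w = 0
      · subst hw
        have hx : x = 0 := by
          have : x ^ 2 = 0 := by rw [← h4]; ring
          exact pow_eq_zero_iff (n := 2) (by norm_num) |>.mp this
        subst hx
        exact ⟨(0, 0), by simp⟩
      · have hx : x ≠ 0 := by
          intro hx
          apply hw
          have : w ^ 3 = 0 := by rw [h4, hx]; ring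
          exact pow_eq_zero_iff (n := 3) (by norm_num) |>.mp this
        refine ⟨(0, x / w), ?_⟩
        simp only [Prod.mk.injEq]
        refine ⟨trivial, by ring, ?_, ?_⟩
        · field_simp
          linear_combination -h4
        · field_simp
          linear_combination -h4
    · refine ⟨(u, v / u), ?_⟩
      simp only [Prod.mk.injEq]
      refine ⟨trivial, by field_simp, ?_, ?_⟩
      · field_simp
        linear_combination -h1
      · field_simp
        linear_combination (-v)*h1 + u^2*h2
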